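/- Let G be a locally compact Hausdorff topological group and let (Γₙ)_{n∈ℕ} be a sequence of cocompact lattices in G which is uniformly discrete. Then for every compact set C ⊆ G there exists r ∈ ℕ such that #(x⁻¹Γₙ* x ∩ C) ≤ r holds for all n ∈ ℕ and all x ∈ G. -/

import Mathlib

/-- Lemma 2.4 of the paper.  Let `G` be a locally compact Hausdorff
topological group and `(Γₙ)` a uniformly discrete sequence of cocompact lattices in `G`
(discrete subgroups with compact quotient `Γₙ\G`).  Then for every compact `C ⊆ G`
there is `r ∈ ℕ` with `#(x⁻¹Γₙ* x ∩ C) ≤ r` for all `n` and all `x ∈ G`. -/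
theorem stmt1 {G : Type*} [Group G] [TopologicalSpace G] [IsTopologicalGroup G]
    [LocallyCompactSpace G] [T2Space G]
    (Γ : ℕ → Subgroup G)
    (hdisc : ∀ n, DiscreteTopology ↥(Γ n))
    (hcocpt : ∀ n, CompactSpace (Quotient (QuotientGroup.rightRel (Γ n))))
    (hud : ∃ U ∈ nhds (1 : G), ∀ (n : ℕ) (x : G),
      ((fun γ => x⁻¹ * γ * x) '' ((Γ n : Set G))) ∩ U = {1})
    (C : Set G) (hC : IsCompact C) :
    ∃ r : ℕ, ∀ (n : ℕ) (x : G),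
      (((fun γ => x⁻¹ * γ * x) '' ((Γ n : Set G) \ {1})) ∩ C).encard ≤ (r : ℕ∞) := by
  classical
  obtain ⟨U, hU, hUprop⟩ := hud
  obtain ⟨V, hV, hVsplit⟩ := exists_nhds_split_inv hU
  -- cover C by finitely many sets W c = {g | g * c⁻¹ ∈ V}
  set W : G → Set G := fun c => (fun g => g * c⁻¹) ⁻¹' V with hW
  have hWnhds : ∀ c ∈ C, W c ∈ nhds c := by
    intro c _
    have hcont : Continuous fun g : G => g * c⁻¹ := continuous_id.mul continuous_const
    exact hcont.continuousAt.preimage_mem_nhds (by simp; exact hV)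
  obtain ⟨t, htC, hcover⟩ := hC.elim_nhds_subcover W hWnhds
  refine ⟨t.card, fun n x => ?_⟩
  set S := ((fun γ => x⁻¹ * γ * x) '' ((Γ n : Set G) \ {1})) ∩ C with hS
  -- choice function: each element of S lies in some W c, c ∈ t
  have hex : ∀ a ∈ S, ∃ c ∈ t, a ∈ W c := by
    intro a ha
    have : a ∈ ⋃ c ∈ t, W c := hcover ha.2
    simpa using this
  set f : G → G := fun a => if h : ∃ c ∈ t, a ∈ W c then h.choose else 1 with hf
  have hmaps : Set.MapsTo f S (↑t : Set G) := by
    intro a ha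
    have h := hex a ha
    simp only [hf, dif_pos h]
    exact h.choose_spec.1
  have hmem : ∀ a ∈ S, a ∈ W (f a) := by
    intro a ha
    have h := hex a ha
    simp only [hf, dif_pos h]
    exact h.choose_spec.2
  have hinj : Set.InjOn f S := by
    intro a ha b hb hfab
    -- a * b⁻¹ ∈ U
    have hav : a * (f a)⁻¹ ∈ V := hmem a ha
    have hbv : b * (f a)⁻¹ ∈ V := by rw [hfab]; exact hmem b hb
    have hU1 : a * b⁻¹ ∈ U := by
      have := hVsplit _ hav _ hbv
      have heq : (a * (f a)⁻¹) / (b * (f a)⁻¹) = a * b⁻¹ := by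
        simp [div_eq_mul_inv, mul_assoc]
      rwa [heq] at this
    -- a * b⁻¹ ∈ conjugated subgroup
    obtain ⟨γ, hγ, hγe⟩ := ha.1
    obtain ⟨δ, hδ, hδe⟩ := hb.1
    have hmemΓ : a * b⁻¹ ∈ (fun γ => x⁻¹ * γ * x) '' ((Γ n : Set G)) := by
      refine ⟨γ * δ⁻¹, mul_mem hγ.1 (inv_mem hδ.1), ?_⟩
      simp only [← hγe, ← hδe]; group
    have : a * b⁻¹ ∈ ({1} : Set G) := by
      rw [← hUprop n x]; exact ⟨hmemΓ, hU1⟩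
    have : a * b⁻¹ = 1 := this
    exact mul_inv_eq_one.mp this
  calc S.encard ≤ (↑t : Set G).encard := Set.encard_le_encard_of_injOn hmaps hinj
    _ = (t.card : ℕ∞) := Set.encard_coe_eq_coe_finsetCard t
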